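/- Let ℓ, m be positive integers with m ≤ ℓ, let u be an odd integer, and define h(y) = ((u·y) mod 2^ℓ) / 2^(ℓ-m) (integer division, i.e., keeping the top m bits). Then for any nonnegative integers y and z, h(y) + h(z) is congruent modulo 2^m to either h(y+z) or h(y+z) - 1. -/

import Mathlib

/-- The multiplicative hash: top `m` bits of `u * y mod 2^ℓ`. -/
def mulHash (ℓ m u y : ℕ) : ℕ := (u * y % 2 ^ ℓ) / 2 ^ (ℓ - m)

/-- Pseudolinearity: h(y) + h(z) ≡ h(y+z) or h(y+z) - 1 (mod 2^m). -/
theorem mulHash_pseudolinear (ℓ m u : ℕ) (hm : 0 < m) (hml : m ≤ ℓ) (hu : Odd u)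
    (y z : ℕ) :
    ((mulHash ℓ m u y + mulHash ℓ m u z : ℕ) : ZMod (2 ^ m)) =
        (mulHash ℓ m u (y + z) : ZMod (2 ^ m)) ∨
      ((mulHash ℓ m u y + mulHash ℓ m u z : ℕ) : ZMod (2 ^ m)) =
        (mulHash ℓ m u (y + z) : ZMod (2 ^ m)) - 1 := by
  set d := 2 ^ (ℓ - m) with hd
  have hd0 : 0 < d := Nat.pow_pos (by norm_num)
  set a := u * y % 2 ^ ℓ with ha
  set b := u * z % 2 ^ ℓ with hb
  set c := u * (y + z) % 2 ^ ℓ with hc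
  have hL0 : (0:ℕ) < 2 ^ ℓ := Nat.pow_pos (by norm_num)
  have hL : (2:ℕ) ^ ℓ = d * 2 ^ m := by
    rw [hd, ← pow_add, Nat.sub_add_cancel hml]
  have hcab : c = (a + b) % 2 ^ ℓ := by
    rw [ha, hb, hc, Nat.mul_add, Nat.add_mod]
  set q := (a + b) / 2 ^ ℓ with hqdef
  have hq : a + b = c + 2 ^ ℓ * q := by
    rw [hcab, hqdef]; exact (Nat.mod_add_div _ _).symm
  have key : (a + b) / d = c / d + 2 ^ m * q := by
    rw [hq, hL, mul_assoc, Nat.add_mul_div_left _ _ hd0]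
  have hsplit := Nat.add_div (a := a) (b := b) hd0
  have hzm : (2 : ZMod (2 ^ m)) ^ m = 0 := by
    exact_mod_cast ZMod.natCast_self (2 ^ m)
  have h1 : mulHash ℓ m u y = a / d := rfl
  have h2 : mulHash ℓ m u z = b / d := rfl
  have h3 : mulHash ℓ m u (y + z) = c / d := rfl
  rw [h1, h2, h3]
  by_cases he : d ≤ a % d + b % d
  · right
    rw [if_pos he] at hsplit
    have : (a / d + b / d : ℕ) + 1 = c / d + 2 ^ m * q := by omega
    have hz : ((a / d + b / d : ℕ) + 1 : ZMod (2 ^ m))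
        = ((c / d : ℕ) : ZMod (2 ^ m)) + 2 ^ m * q := by
      exact_mod_cast congrArg (Nat.cast : ℕ → ZMod (2 ^ m)) this
    push_cast at hz ⊢
    rw [hzm] at hz
    linear_combination hz
  · left
    rw [if_neg he] at hsplit
    have : (a / d + b / d : ℕ) = c / d + 2 ^ m * q := by omega
    have hz : ((a / d + b / d : ℕ) : ZMod (2 ^ m))
        = ((c / d : ℕ) : ZMod (2 ^ m)) + 2 ^ m * q := by
      exact_mod_cast congrArg (Nat.cast : ℕ → ZMod (2 ^ m)) this
    push_cast at hz ⊢
    rw [hzm] at hz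
    linear_combination hz
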